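/- Let p be a prime, and O an m×n integer matrix such that for all s ≠ t, O[s]·O[t] ≡ w·d mod p, and for all s, O[s]·O[s] ≡ (w−1)·d mod p, where w, d are integers with p | w. Let F be a field of characteristic p containing a square root s₀ of d (image of d in F). Then the rows of the matrix A = [s₀·I_m | O] over F span a self-orthogonal code of length m+n and dimension m (provided d ≠ 0 in F); if m = n the code is self-dual. -/

import Mathlib

open Matrix Finset

/-- If an integer matrix O satisfies O[s]·O[t] ≡ w·d mod p for s ≠ t and
O[s]·O[s] ≡ (w−1)·d mod p, with p prime, p ∣ w, and F of characteristic p contains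
s₀ with s₀² = d and d ≠ 0 in F, then the rows of A = [s₀·I_m | O] span a
self-orthogonal code of length m+n and dimension m; if m = n it is self-dual. -/
theorem stmt10 {F : Type*} [Field F] (p : ℕ) (hp : p.Prime) [CharP F p]
    (m n : ℕ) (w d : ℤ) (O : Matrix (Fin m) (Fin n) ℤ)
    (hst : ∀ s t : Fin m, s ≠ t → O s ⬝ᵥ O t ≡ w * d [ZMOD p])
    (hss : ∀ s : Fin m, O s ⬝ᵥ O s ≡ (w - 1) * d [ZMOD p])
    (hpw : (p : ℤ) ∣ w)
    (s₀ : F) (hs₀ : s₀ ^ 2 = (d : F)) (hd0 : (d : F) ≠ 0)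
    (A : Fin m → (Fin m ⊕ Fin n) → F)
    (hA : A = fun i => Sum.elim (fun i' => if i = i' then s₀ else 0)
      (fun j => ((O i j : ℤ) : F))) :
    (∀ x ∈ Submodule.span F (Set.range A),
      ∀ y ∈ Submodule.span F (Set.range A), x ⬝ᵥ y = 0) ∧
    Module.finrank F (Submodule.span F (Set.range A)) = m ∧
    (m = n → ∀ z : (Fin m ⊕ Fin n) → F,
      z ∈ Submodule.span F (Set.range A) ↔
        ∀ y ∈ Submodule.span F (Set.range A), z ⬝ᵥ y = 0) := by
  -- cast lemma
  have hcast : ∀ a b : ℤ, a ≡ b [ZMOD p] → ((a : F) = (b : F)) := by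
    intro a b h
    have hd : (p : ℤ) ∣ b - a := Int.ModEq.dvd h
    obtain ⟨k, hk⟩ := hd
    have : ((b - a : ℤ) : F) = 0 := by
      rw [hk]; push_cast; simp [CharP.cast_eq_zero F p]
    push_cast at this
    exact (sub_eq_zero.mp this).symm
  have hwF : (w : F) = 0 := by
    obtain ⟨k, hk⟩ := hpw
    rw [hk]; push_cast; simp [CharP.cast_eq_zero F p]
  -- key orthogonality of rows
  have key : ∀ i j : Fin m, A i ⬝ᵥ A j = 0 := by
    intro i j
    have hsplit : A i ⬝ᵥ A j
        = (∑ i' : Fin m, (if i = i' then s₀ else 0) * (if j = i' then s₀ else 0))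
          + ((O i ⬝ᵥ O j : ℤ) : F) := by
      rw [hA]
      simp only [dotProduct, Fintype.sum_sum_type, Sum.elim_inl, Sum.elim_inr]
      push_cast
      ring
    by_cases hij : i = j
    · subst hij
      rw [hsplit]
      have h1 : (∑ i' : Fin m, (if i = i' then s₀ else 0) * (if i = i' then s₀ else 0))
          = s₀ ^ 2 := by
        rw [Finset.sum_eq_single i]
        · simp [sq]
        · intro b _ hb; simp [Ne.symm hb]
        · simp
      rw [h1, hs₀, hcast _ _ (hss i)]
      push_cast
      rw [hwF]
      ring
    · rw [hsplit]
      have h1 : (∑ i' : Fin m, (if i = i' then s₀ else 0) * (if j = i' then s₀ else 0)) = 0 := by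
        apply Finset.sum_eq_zero
        intro x _
        rcases eq_or_ne i x with rfl | h
        · simp [fun h' => hij (h' : j = i).symm, Ne.symm hij]
        · simp [h]
      rw [h1, hcast _ _ (hst i j hij)]
      push_cast
      rw [hwF]
      ring
  set W := Submodule.span F (Set.range A) with hW
  -- self-orthogonality of the span
  have ortho : ∀ x ∈ W, ∀ y ∈ W, x ⬝ᵥ y = 0 := by
    intro x hx y hy
    induction hx using Submodule.span_induction with
    | mem u hu =>
      obtain ⟨i, rfl⟩ := hu
      induction hy using Submodule.span_induction with
      | mem v hv => obtain ⟨j, rfl⟩ := hv; exact key i j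
      | zero => simp
      | add a b _ _ ha hb => rw [dotProduct_add, ha, hb, add_zero]
      | smul c a _ ha => rw [dotProduct_smul, ha, smul_zero]
    | zero => simp
    | add a b _ _ ha hb => rw [add_dotProduct, ha, hb, add_zero]
    | smul c a _ ha => rw [smul_dotProduct, ha, smul_zero]
  -- linear independence
  have hs₀0 : s₀ ≠ 0 := by
    intro h; apply hd0; rw [← hs₀, h]; ring
  have hli : LinearIndependent F A := by
    rw [Fintype.linearIndependent_iff]
    intro g hg i
    have := congr_fun hg (Sum.inl i)
    simp only [Finset.sum_apply, Pi.smul_apply, smul_eq_mul, hA, Sum.elim_inl,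
      Pi.zero_apply] at this
    rw [Finset.sum_eq_single i] at this
    · simp only [if_pos rfl] at this
      exact (mul_eq_zero.mp this).resolve_right hs₀0
    · intro b _ hb; simp [hb]
    · simp
  have hrank : Module.finrank F W = m := by
    rw [hW, finrank_span_eq_card hli, Fintype.card_fin]
  refine ⟨ortho, hrank, ?_⟩
  -- self-duality when m = n
  intro hmn z
  -- set up the dot product bilinear form
  set B : LinearMap.BilinForm F ((Fin m ⊕ Fin n) → F) :=
    LinearMap.mk₂ F (fun x y => x ⬝ᵥ y)
      (fun a b c => add_dotProduct a b c)
      (fun c a b => smul_dotProduct c a b)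
      (fun a b c => dotProduct_add a b c)
      (fun c a b => dotProduct_smul c a b) with hB
  have hBapp : ∀ x y, B x y = x ⬝ᵥ y := fun x y => rfl
  have hrefl : B.IsRefl := by
    intro x y h
    rw [hBapp] at h ⊢
    rwa [dotProduct_comm]
  have hnd : B.Nondegenerate := by
    have hl : ∀ x, (∀ y, B x y = 0) → x = 0 := by
      intro x hx
      funext i
      have := hx (Pi.single i 1)
      rw [hBapp, dotProduct_single] at this
      simpa using this
    exact ⟨hl, fun x hx => hl x (fun y => hrefl _ _ (hx y))⟩
  have hle : W ≤ B.orthogonal W :=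
    fun x hx => (LinearMap.BilinForm.mem_orthogonal_iff).mpr
      (fun y hy => ortho y hy x hx)
  have heq : B.orthogonal W = W := by
    apply (Submodule.eq_of_le_of_finrank_le hle ?_).symm
    rw [LinearMap.BilinForm.finrank_orthogonal hnd, hrank]
    simp only [Module.finrank_pi, Fintype.card_sum, Fintype.card_fin]
    omega
  constructor
  · intro hz y hy; exact ortho z hz y hy
  · intro h
    rw [← heq]
    rw [LinearMap.BilinForm.mem_orthogonal_iff]
    intro y hy
    have := h y hy
    rw [hBapp, dotProduct_comm]
    exact this
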